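/- Let A be a real d×d matrix that is negative definite (i.e., x^T A x < 0 for all nonzero x), and let w > 0 be a real number with w(w+1) > ‖A‖², where ‖A‖ is the operator norm. Then the 3d×3d block matrix G = [[-wI, -Aᵀ, 0], [0, -I, A], [I, 0, 0]] is Hurwitz, i.e., every eigenvalue of G has strictly negative real part. -/

import Mathlib

open Matrix
open scoped Matrix.Norms.L2Operator

noncomputable def nsqC {n : Type*} [Fintype n] (u : n → ℂ) : ℝ := ∑ i, Complex.normSq (u i)

lemma nsqC_nonneg {n : Type*} [Fintype n] (u : n → ℂ) : 0 ≤ nsqC u :=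
  Finset.sum_nonneg fun i _ => Complex.normSq_nonneg _

lemma nsqC_eq_zero {n : Type*} [Fintype n] {u : n → ℂ} : nsqC u = 0 ↔ u = 0 := by
  constructor
  · intro h
    funext i
    have := (Finset.sum_eq_zero_iff_of_nonneg (fun i _ => Complex.normSq_nonneg (u i))).mp h i
      (Finset.mem_univ i)
    simpa [Complex.normSq_eq_zero] using this
  · intro h; simp [h, nsqC]

lemma star_dot_eq_nsqC {n : Type*} [Fintype n] (u : n → ℂ) :
    star u ⬝ᵥ u = (nsqC u : ℂ) := by
  simp only [dotProduct, Pi.star_apply, nsqC, Complex.ofReal_sum]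
  refine Finset.sum_congr rfl fun i _ => ?_
  rw [Complex.star_def, ← Complex.normSq_eq_conj_mul_self]

lemma nsqC_smul {n : Type*} [Fintype n] (c : ℂ) (u : n → ℂ) :
    nsqC (c • u) = Complex.normSq c * nsqC u := by
  simp [nsqC, Complex.normSq_mul, Finset.mul_sum]

lemma exists_eigvec {n : Type*} [Fintype n] [DecidableEq n] (M : Matrix n n ℂ) {μ : ℂ}
    (h : μ ∈ spectrum ℂ M) : ∃ v : n → ℂ, v ≠ 0 ∧ M *ᵥ v = μ • v := by
  rw [spectrum.mem_iff] at h
  have hd : (algebraMap ℂ (Matrix n n ℂ) μ - M).det = 0 := by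
    by_contra hd
    exact h ((Matrix.isUnit_iff_isUnit_det _).mpr (isUnit_iff_ne_zero.mpr hd))
  obtain ⟨v, hv0, hv⟩ := (Matrix.exists_mulVec_eq_zero_iff).mpr hd
  refine ⟨v, hv0, ?_⟩
  rw [Matrix.sub_mulVec, sub_eq_zero] at hv
  rw [← hv]
  funext i
  simp [Matrix.algebraMap_matrix_apply, Matrix.mulVec, dotProduct, Finset.sum_ite_eq,
    mul_comm]

-- complexification commutes with star on real matrices
lemma mulVec_map_star {d : ℕ} (A : Matrix (Fin d) (Fin d) ℝ) (z : Fin d → ℂ) :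
    (A.map (algebraMap ℝ ℂ)) *ᵥ (star z) = star ((A.map (algebraMap ℝ ℂ)) *ᵥ z) := by
  funext i
  simp only [Matrix.mulVec, dotProduct, Pi.star_apply, Matrix.map_apply, star_sum, star_mul',
    Complex.star_def]
  refine Finset.sum_congr rfl fun j _ => ?_
  simp [Complex.conj_ofReal, mul_comm]

lemma nsqC_mulVec_map {d : ℕ} (A : Matrix (Fin d) (Fin d) ℝ) (z : Fin d → ℂ) :
    nsqC ((A.map (algebraMap ℝ ℂ)) *ᵥ z) =
      nsqC (fun i => ((A *ᵥ (fun j => (z j).re)) i : ℂ)) +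
      nsqC (fun i => ((A *ᵥ (fun j => (z j).im)) i : ℂ)) := by
  simp only [nsqC, ← Finset.sum_add_distrib]
  refine Finset.sum_congr rfl fun i _ => ?_
  have hre : ((A.map (algebraMap ℝ ℂ)) *ᵥ z) i =
      ((A *ᵥ (fun j => (z j).re)) i : ℂ) + ((A *ᵥ (fun j => (z j).im)) i : ℂ) * Complex.I := by
    simp only [Matrix.mulVec, dotProduct, Matrix.map_apply, Complex.ofReal_sum, Finset.sum_mul,
      ← Finset.sum_add_distrib]
    refine Finset.sum_congr rfl fun j _ => ?_
    conv_lhs => rw [← Complex.re_add_im (z j)]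
    simp only [Complex.coe_algebraMap]
    push_cast
    ring
  rw [hre]
  simp [Complex.normSq_apply]

lemma mulVec_sq_bound {d : ℕ} (A : Matrix (Fin d) (Fin d) ℝ) (p : Fin d → ℝ) :
    ∑ i, ((A *ᵥ p) i)^2 ≤ ‖A‖^2 * ∑ i, (p i)^2 := by
  have h := Matrix.l2_opNorm_mulVec A ((EuclideanSpace.equiv (Fin d) ℝ).symm p)
  rw [EuclideanSpace.norm_eq, EuclideanSpace.norm_eq] at h
  simp only [Real.norm_eq_abs, sq_abs] at h
  have h' : Real.sqrt (∑ x, ((A *ᵥ p) x)^2) ≤ ‖A‖ * Real.sqrt (∑ x, (p x)^2) := h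
  have h1 : (0:ℝ) ≤ ∑ i, ((A *ᵥ p) i)^2 := Finset.sum_nonneg fun i _ => sq_nonneg _
  have h2 : (0:ℝ) ≤ ∑ i, (p i)^2 := Finset.sum_nonneg fun i _ => sq_nonneg _
  nlinarith [Real.sq_sqrt h1, Real.sq_sqrt h2, Real.sqrt_nonneg (∑ i, ((A *ᵥ p) i)^2),
    Real.sqrt_nonneg (∑ i, (p i)^2), norm_nonneg A, h']

lemma nsqC_ofReal {d : ℕ} (p : Fin d → ℝ) :
    nsqC (fun i => (p i : ℂ)) = ∑ i, (p i)^2 := by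
  simp [nsqC, Complex.normSq_apply, sq]

/-- The 3d×3d block matrix G = [[-wI, -Aᵀ, 0], [0, -I, A], [I, 0, 0]]. -/
noncomputable def blockG {d : ℕ} (A : Matrix (Fin d) (Fin d) ℝ) (w : ℝ) :
    Matrix (Fin d ⊕ (Fin d ⊕ Fin d)) (Fin d ⊕ (Fin d ⊕ Fin d)) ℝ :=
  Matrix.fromBlocks (-w • (1 : Matrix (Fin d) (Fin d) ℝ))
    (Matrix.fromCols (-Aᵀ) 0)
    (Matrix.fromRows 0 1)
    (Matrix.fromBlocks (-1) A 0 0)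

lemma cubic_re_neg (a b c : ℝ) (ha : 0 < a) (hb : 0 < b) (hc : 0 < c) (hab : c < a*b)
    (μ : ℂ) (h : μ^3 + a*μ^2 + b*μ + c = 0) : μ.re < 0 := by
  set α := μ.re with hα
  set β := μ.im with hβ
  have hμ : μ = (α : ℂ) + (β : ℂ) * Complex.I := (Complex.re_add_im μ).symm
  rw [hμ] at h
  have hre := congrArg Complex.re h
  have him := congrArg Complex.im h
  simp [Complex.add_re, Complex.add_im, Complex.mul_re, Complex.mul_im, pow_succ] at hre him
  ring_nf at hre him
  by_contra hge
  push_neg at hge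
  rcases eq_or_ne β 0 with hb0 | hb0
  · rw [hb0] at hre; nlinarith
  · have him2 : 3*α^2 - β^2 + 2*a*α + b = 0 := by
      rcases mul_eq_zero.mp (show β * (3*α^2 - β^2 + 2*a*α + b) = 0 by nlinarith [him]) with h1 | h1
      · exact absurd h1 hb0
      · exact h1
    have hsub : β^2 = 3*α^2 + 2*a*α + b := by linarith
    have key : 8*α^3 + 8*a*α^2 + 2*b*α + 2*a^2*α + (a*b - c) = 0 := by
      linear_combination -hre + (-3*α - a)*hsub
    nlinarith [key, mul_nonneg (mul_nonneg hge hge) hge, mul_nonneg ha.le (mul_nonneg hge hge),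
      mul_nonneg hb.le hge, mul_nonneg (mul_nonneg ha.le ha.le) hge]

theorem blockG_hurwitz {d : ℕ} (A : Matrix (Fin d) (Fin d) ℝ) (w : ℝ)
    (hA : ∀ x : Fin d → ℝ, x ≠ 0 → x ⬝ᵥ A.mulVec x < 0)
    (hw : 0 < w) (hwA : ‖A‖ ^ 2 < w * (w + 1)) :
    ∀ μ ∈ spectrum ℂ ((blockG A w).map (algebraMap ℝ ℂ)), μ.re < 0 := by
  intro μ hμ
  classical
  set Ac := A.map (algebraMap ℝ ℂ) with hAcdef
  obtain ⟨v, hv0, hv⟩ := exists_eigvec _ hμ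
  set x : Fin d → ℂ := fun i => v (Sum.inl i) with hxdef
  set y : Fin d → ℂ := fun i => v (Sum.inr (Sum.inl i)) with hydef
  set z : Fin d → ℂ := fun i => v (Sum.inr (Sum.inr i)) with hzdef
  have hM : (blockG A w).map (algebraMap ℝ ℂ) =
      Matrix.fromBlocks (-(w:ℂ) • 1) (Matrix.fromCols (-Acᵀ) 0)
        (Matrix.fromRows 0 1) (Matrix.fromBlocks (-1) Ac 0 0) := by
    ext i j
    rcases i with i | (i | i) <;> rcases j with j | (j | j) <;>
      simp [blockG, Ac, Matrix.fromBlocks, Matrix.fromCols,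
        Matrix.one_apply, Matrix.map_apply, apply_ite (algebraMap ℝ ℂ), apply_ite Complex.ofReal]
  rw [hM] at hv
  have hvsum : v ∘ Sum.inr = Sum.elim y z := by funext i; cases i <;> rfl
  have hvl : v ∘ Sum.inl = x := rfl
  rw [Matrix.fromBlocks_mulVec, hvsum, hvl, Matrix.fromCols_mulVec_sumElim,
    Matrix.fromRows_mulVec, Matrix.fromBlocks_mulVec] at hv
  -- extract the three equations
  have e1 : (μ + w) • x = -(Acᵀ *ᵥ y) := by
    funext i
    have h := congrFun hv (Sum.inl i)
    simp [Matrix.smul_mulVec, Matrix.one_mulVec, Matrix.neg_mulVec] at h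
    simp [Pi.smul_apply, smul_eq_mul]
    linear_combination -h
  have e2 : (μ + 1) • y = Ac *ᵥ z := by
    funext i
    have h := congrFun hv (Sum.inr (Sum.inl i))
    simp [Matrix.neg_mulVec, Matrix.one_mulVec] at h
    simp [Pi.smul_apply, smul_eq_mul]
    linear_combination -h
  have e3 : x = μ • z := by
    funext i
    have h := congrFun hv (Sum.inr (Sum.inr i))
    simp [Matrix.one_mulVec] at h
    simpa using h
  by_cases hz0 : z = 0
  · have hx0 : x = 0 := by rw [e3, hz0]; simp
    have hy0 : y ≠ 0 := by
      intro h0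
      apply hv0
      funext i
      rcases i with i | (i | i)
      · exact congrFun hx0 i
      · exact congrFun h0 i
      · exact congrFun hz0 i
    have h10 : (μ + 1) • y = 0 := by rw [e2, hz0, Matrix.mulVec_zero]
    rcases smul_eq_zero.mp h10 with h1 | h1
    · have hm : μ = -1 := by linear_combination h1
      simp [hm]
    · exact absurd h1 hy0
  · by_cases hμ1 : μ = -1
    · simp [hμ1]
    have hnz : 0 < nsqC z :=
      lt_of_le_of_ne (nsqC_nonneg z) fun h => hz0 (nsqC_eq_zero.mp h.symm)
    set p : Fin d → ℝ := fun i => (z i).re with hpdef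
    set q : Fin d → ℝ := fun i => (z i).im with hqdef
    have hnsqz : nsqC z = (∑ i, p i ^ 2) + ∑ i, q i ^ 2 := by
      simp [nsqC, Complex.normSq_apply, ← Finset.sum_add_distrib, sq, hpdef, hqdef]
    have hAinv : ∀ u : Fin d → ℝ, A *ᵥ u = 0 → u = 0 := by
      intro u hu
      by_contra h0
      have h1 := hA u h0
      rw [hu] at h1
      simp at h1
    have hAz0 : Ac *ᵥ z ≠ 0 := by
      intro h0
      apply hz0
      have h1 : nsqC (Ac *ᵥ z) = 0 := by rw [h0]; exact nsqC_eq_zero.mpr rfl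
      rw [nsqC_mulVec_map, nsqC_ofReal, nsqC_ofReal] at h1
      have h2 : (0:ℝ) ≤ ∑ i, ((A *ᵥ p) i) ^ 2 := Finset.sum_nonneg fun i _ => sq_nonneg _
      have h3 : (0:ℝ) ≤ ∑ i, ((A *ᵥ q) i) ^ 2 := Finset.sum_nonneg fun i _ => sq_nonneg _
      have hp0 : A *ᵥ p = 0 := by
        funext i
        have h4 : ∑ i, ((A *ᵥ p) i) ^ 2 = 0 := by linarith
        have := (Finset.sum_eq_zero_iff_of_nonneg
          (fun i (_ : i ∈ Finset.univ) => sq_nonneg ((A *ᵥ p) i))).mp h4 i (Finset.mem_univ i)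
        simpa [pow_eq_zero_iff] using this
      have hq0 : A *ᵥ q = 0 := by
        funext i
        have h4 : ∑ i, ((A *ᵥ q) i) ^ 2 = 0 := by linarith
        have := (Finset.sum_eq_zero_iff_of_nonneg
          (fun i (_ : i ∈ Finset.univ) => sq_nonneg ((A *ᵥ q) i))).mp h4 i (Finset.mem_univ i)
        simpa [pow_eq_zero_iff] using this
      have hp := hAinv p hp0
      have hq := hAinv q hq0
      funext i
      have hpi : (z i).re = 0 := congrFun hp i
      have hqi : (z i).im = 0 := congrFun hq i
      exact Complex.ext hpi hqi
    have hAzpos : 0 < nsqC (Ac *ᵥ z) :=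
      lt_of_le_of_ne (nsqC_nonneg _) fun h => hAz0 (nsqC_eq_zero.mp h.symm)
    have hbound : nsqC (Ac *ᵥ z) ≤ ‖A‖ ^ 2 * nsqC z := by
      rw [nsqC_mulVec_map, nsqC_ofReal, nsqC_ofReal, hnsqz, mul_add]
      exact add_le_add (mulVec_sq_bound A p) (mulVec_sq_bound A q)
    have dotEq : (μ * (μ + w)) * (nsqC z : ℂ) = -((starRingEnd ℂ) (μ + 1) * (nsqC y : ℂ)) := by
      have key : (μ * (μ + w)) • z = -(Acᵀ *ᵥ y) := by
        rw [← e1, e3, smul_smul, mul_comm]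
      have h1 := congrArg (fun u => star z ⬝ᵥ u) key
      simp only [dotProduct_smul, dotProduct_neg] at h1
      rw [star_dot_eq_nsqC, Matrix.dotProduct_mulVec, Matrix.vecMul_transpose,
        mulVec_map_star, ← e2, star_smul, smul_dotProduct, star_dot_eq_nsqC] at h1
      simpa [smul_eq_mul] using h1
    have hAz_eq : (nsqC (Ac *ᵥ z) : ℂ) = (μ + 1) * (starRingEnd ℂ) (μ + 1) * (nsqC y : ℂ) := by
      rw [← e2, nsqC_smul, Complex.mul_conj]
      push_cast
      ring
    set c : ℝ := nsqC (Ac *ᵥ z) / nsqC z with hcdef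
    have hcpos : 0 < c := div_pos hAzpos hnz
    have hcle : c ≤ ‖A‖ ^ 2 := by
      rw [hcdef, div_le_iff₀ hnz]
      exact hbound
    have hNz : (nsqC z : ℂ) ≠ 0 := by exact_mod_cast ne_of_gt hnz
    have hcz : (c : ℂ) * (nsqC z : ℂ) = (nsqC (Ac *ᵥ z) : ℂ) := by
      rw [hcdef]
      push_cast
      field_simp
    have heq : (μ^3 + ((w:ℂ) + 1) * μ^2 + (w:ℂ) * μ + (c:ℂ)) * (nsqC z : ℂ) = 0 := by
      linear_combination (μ + 1) * dotEq + hcz + hAz_eq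
    have hfin : μ^3 + ((w:ℂ)+1)*μ^2 + (w:ℂ)*μ + (c:ℂ) = 0 :=
      (mul_eq_zero.mp heq).resolve_right hNz
    exact cubic_re_neg (w+1) w c (by linarith) hw hcpos (by nlinarith [hcle, hwA]) μ
      (by push_cast; linear_combination hfin)
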